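/- Let (U,O') ⊨ T_convex, E ≼ E₁ ≺ U with E ⊄ O', x ∈ U \ E, and suppose tp(x/E) is not realized in E₁. Then x is weakly immediate over (E, O'∩E) if and only if x is weakly immediate over (E₁, O'∩E₁); and in that case the two types have equal cofinality (the least length of a pseudo-Cauchy sequence converging to x). -/

import Mathlib

open FirstOrder

section Preamble

universe u

variable {M : Type u}

/-- A unary function is definable (via its graph) with parameters from `A`. -/
def DefFun (L : FirstOrder.Language) [L.Structure M] (A : Set M) (f : M → M) : Prop :=
  A.Definable L {p : Fin 2 → M | f (p 0) = p 1}

/-- A unary set is definable with parameters from `A`. -/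
def DefSet (L : FirstOrder.Language) [L.Structure M] (A : Set M) (s : Set M) : Prop :=
  A.Definable L {p : Fin 1 → M | p 0 ∈ s}

/-- `c` is in the definable closure of `A`. -/
def InDcl (L : FirstOrder.Language) [L.Structure M] (A : Set M) (c : M) : Prop :=
  DefSet L A {c}

/-- `A` is closed under definable closure. -/
def DclClosed (L : FirstOrder.Language) [L.Structure M] (A : Set M) : Prop :=
  ∀ c : M, InDcl L A c → c ∈ A

/-- The definable closure of `A`. -/
def Dcl (L : FirstOrder.Language) [L.Structure M] (A : Set M) : Set M :=
  {c : M | InDcl L A c}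

/-- The order and field operations of `M` are `∅`-definable in `L`. -/
def FieldCompat (L : FirstOrder.Language) (M : Type u) [L.Structure M]
    [Field M] [LinearOrder M] [IsStrictOrderedRing M] : Prop :=
  (∅ : Set M).Definable L {p : Fin 2 → M | p 0 ≤ p 1} ∧
  (∅ : Set M).Definable L {p : Fin 3 → M | p 0 + p 1 = p 2} ∧
  (∅ : Set M).Definable L {p : Fin 3 → M | p 0 * p 1 = p 2}

/-- A set is a finite union of points and (possibly unbounded) open intervals. -/
def FinUnionIntervals [LinearOrder M] (s : Set M) : Prop :=
  ∃ t : Finset (Set M),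
    (∀ u ∈ t, (∃ a b : M, u = Set.Ioo a b) ∨ (∃ a : M, u = Set.Ioi a) ∨
      (∃ a : M, u = Set.Iio a) ∨ (∃ a : M, u = {a}) ∨ u = Set.univ) ∧
    s = ⋃₀ ↑t

/-- The structure `M` is o-minimal. -/
def IsOMin (L : FirstOrder.Language) (M : Type u) [L.Structure M] [LinearOrder M] : Prop :=
  ∀ s : Set M, DefSet L Set.univ s → FinUnionIntervals s

/-- An order-convex subring. -/
def ConvexSubring [Field M] [LinearOrder M] [IsStrictOrderedRing M] (O : Subring M) : Prop :=
  ∀ a b : M, a ∈ O → |b| ≤ |a| → b ∈ O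

/-- A `T`-convex subring: convex and closed under all `∅`-definable
total continuous unary functions. -/
def TConvexSubring (L : FirstOrder.Language) [L.Structure M] [Field M] [LinearOrder M] [IsStrictOrderedRing M]
    [TopologicalSpace M] [OrderTopology M] (O : Subring M) : Prop :=
  ConvexSubring O ∧
  ∀ f : M → M, DefFun L (∅ : Set M) f → Continuous f → ∀ x ∈ O, f x ∈ O

/-- The maximal ideal of a (convex) valuation subring, as a set. -/
def mIdealOf [DivisionRing M] (S : Set M) : Set M := {y : M | y ∈ S ∧ (y = 0 ∨ y⁻¹ ∉ S)}

/-- Dominance: `x ≼ y` with respect to `O`. -/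
def preceq [DivisionRing M] (O : Set M) (x y : M) : Prop :=
  (x = 0 ∧ y = 0) ∨ (y ≠ 0 ∧ x / y ∈ O)

/-- Strict dominance: `x ≺ y` with respect to `O`. -/
def prec [DivisionRing M] (O : Set M) (x y : M) : Prop :=
  y ≠ 0 ∧ x / y ∈ mIdealOf O

/-- Asymptotic equivalence `x ≍ y`. -/
def asymp [DivisionRing M] (O : Set M) (x y : M) : Prop :=
  preceq O x y ∧ preceq O y x

/-- `x ∼ y`, i.e. `x - y ≺ x`. -/
def simRel [DivisionRing M] (O : Set M) (x y : M) : Prop :=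
  prec O (x - y) x

/-- The convex hull of a set in an ordered field. -/
def CHull [Field M] [LinearOrder M] [IsStrictOrderedRing M] (O : Set M) : Set M := {y : M | ∃ o ∈ O, |y| ≤ o}

/-- `x` is weakly `O`-immediate over `E`: the set `val (x - E)` has no maximum. -/
def WeakIm [DivisionRing M] (O : Set M) (E : Set M) (x : M) : Prop :=
  ∀ c ∈ E, ∃ d ∈ E, prec O (x - d) (x - c)

/-- Derivative with respect to the order of the field. -/
def HasODerivAt [Field M] [LinearOrder M] [IsStrictOrderedRing M] (f : M → M) (a l : M) : Prop :=
  ∀ ε : M, 0 < ε → ∃ δ : M, 0 < δ ∧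
    ∀ t : M, t ≠ a → |t - a| < δ → |(f t - f a) / (t - a) - l| < ε

/-- The cut of `x` over `E`: the set of elements realizing the same cut as `x`. -/
def cutSet [Preorder M] (E : Set M) (x : M) : Set M :=
  {u : M | ∀ e ∈ E, (e < u ↔ e < x)}

/-- The canonical valuation ring `O_b = {y ∈ E⟨b⟩ : |y| < E^{>O}}` on `E⟨b⟩`. -/
def Oball (L : FirstOrder.Language) [L.Structure M] [Field M] [LinearOrder M] [IsStrictOrderedRing M]
    (E O : Set M) (b : M) : Set M :=
  {y : M | y ∈ Dcl L (E ∪ {b}) ∧ ∀ e ∈ E, (∀ o ∈ O, o < e) → |y| < e}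

/-- The convex hull `O_b⁻` of `O` in `E⟨b⟩`. -/
def OballMinus (L : FirstOrder.Language) [L.Structure M] [Field M] [LinearOrder M] [IsStrictOrderedRing M]
    (E O : Set M) (b : M) : Set M :=
  {y : M | y ∈ Dcl L (E ∪ {b}) ∧ ∃ o ∈ O, |y| ≤ o}

/-- `κ` bounds the cofinality of the weakly immediate type of `x` over `E`. -/
def CofBound [DivisionRing M] (O E : Set M) (x : M) (κ : Cardinal.{u}) : Prop :=
  ∃ D : Set M, D ⊆ E ∧ Cardinal.mk D ≤ κ ∧ ∀ c ∈ E, ∃ d ∈ D, preceq O (x - d) (x - c)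

end Preamble

section Helpers

variable {U : Type u} [Field U] [LinearOrder U] [IsStrictOrderedRing U] {O' : Subring U}

lemma key_div {a b c : U} (hb : b ≠ 0) : a / b * (b / c) = a / c := by
  rw [div_mul_div_comm, mul_comm a b, mul_div_mul_left a c hb]

lemma preceq_of_abs_le (hconv : ConvexSubring O') {a b : U} (hb : b ≠ 0)
    (h : |a| ≤ |b|) : preceq (O' : Set U) a b := by
  refine Or.inr ⟨hb, hconv 1 (a / b) O'.one_mem ?_⟩
  rw [abs_div, abs_one, div_le_one (abs_pos.mpr hb)]
  exact h

lemma preceq_trans' {a b c : U} (hab : preceq (O' : Set U) a b)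
    (hbc : preceq (O' : Set U) b c) : preceq (O' : Set U) a c := by
  rcases hab with ⟨ha0, hb0⟩ | ⟨hb, habO⟩
  · rcases hbc with ⟨_, hc0⟩ | ⟨hc, _⟩
    · exact Or.inl ⟨ha0, hc0⟩
    · refine Or.inr ⟨hc, ?_⟩
      rw [ha0, zero_div]; exact O'.zero_mem
  · rcases hbc with ⟨hb0, _⟩ | ⟨hc, hbcO⟩
    · exact absurd hb0 hb
    · refine Or.inr ⟨hc, ?_⟩
      rw [← key_div hb (a := a) (c := c)]
      exact O'.mul_mem habO hbcO

lemma prec_of_prec_preceq {a b c : U} (hab : prec (O' : Set U) a b)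
    (hbc : preceq (O' : Set U) b c) : prec (O' : Set U) a c := by
  obtain ⟨hb, habO, halt⟩ := hab
  rcases hbc with ⟨hb0, _⟩ | ⟨hc, hbcO⟩
  · exact absurd hb0 hb
  refine ⟨hc, ?_, ?_⟩
  · rw [← key_div hb (a := a) (c := c)]
    exact O'.mul_mem habO hbcO
  · by_cases ha : a = 0
    · exact Or.inl (by rw [ha, zero_div])
    · refine Or.inr fun hin => ?_
      rcases halt with h0 | hni
      · exact ha ((div_eq_zero_iff.mp h0).resolve_right hb)
      · apply hni
        rw [inv_div] at hin ⊢
        rw [← key_div hc (a := b) (c := a)]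
        exact O'.mul_mem hbcO hin

lemma prec_of_preceq_prec {a b c : U} (hab : preceq (O' : Set U) a b)
    (hbc : prec (O' : Set U) b c) : prec (O' : Set U) a c := by
  obtain ⟨hc, hbcO, halt⟩ := hbc
  rcases hab with ⟨ha0, hb0⟩ | ⟨hb, habO⟩
  · exact ⟨hc, by rw [ha0, zero_div]; exact O'.zero_mem, Or.inl (by rw [ha0, zero_div])⟩
  refine ⟨hc, ?_, ?_⟩
  · rw [← key_div hb (a := a) (c := c)]
    exact O'.mul_mem habO hbcO
  · by_cases ha : a = 0
    · exact Or.inl (by rw [ha, zero_div])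
    · refine Or.inr fun hin => ?_
      rcases halt with h0 | hni
      · exact (div_ne_zero hb hc) h0
      · apply hni
        rw [inv_div] at hin ⊢
        rw [← key_div ha (a := c) (c := b)]
        exact O'.mul_mem hin habO

end Helpers


/-- Let `(U, O') ⊨ T_convex`, `E ≼ E₁ ≺ U` with `E ⊄ O'`,
`x ∈ U \ E`, and suppose `tp(x/E)` is not realized in `E₁` (no `y ∈ E₁ \ E` has the
same cut over `E` as `x`).  Then `x` is weakly immediate over `(E, O' ∩ E)` iff it is
weakly immediate over `(E₁, O' ∩ E₁)`; and in that case the two types have the same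
cofinality (expressed by: for every cardinal `κ`, `κ` bounds the cofinality of the one
type iff it bounds that of the other). -/
theorem stmt15 {L : FirstOrder.Language} {U : Type u} [L.Structure U]
    [Field U] [LinearOrder U] [IsStrictOrderedRing U] [TopologicalSpace U] [OrderTopology U]
    (hOmin : IsOMin L U) (hcompat : FieldCompat L U)
    (O' : Subring U) (hT : TConvexSubring L O') (hnt : ∃ m : U, m ∉ O')
    (E E₁ : Subfield U) (hEE₁ : E ≤ E₁)
    (hEd : DclClosed L (E : Set U)) (hE₁d : DclClosed L (E₁ : Set U))
    (hEO : ∃ e ∈ E, (e : U) ∉ O')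
    (x : U) (hx : x ∉ E)
    (hnr : ¬ ∃ y : U, y ∈ E₁ ∧ y ∉ E ∧ ∀ e ∈ E, ((e : U) < y ↔ (e : U) < x)) :
    (WeakIm (O' : Set U) (E : Set U) x ↔ WeakIm (O' : Set U) (E₁ : Set U) x) ∧
    (WeakIm (O' : Set U) (E : Set U) x →
      ∀ κ : Cardinal.{u}, CofBound (O' : Set U) (E : Set U) x κ ↔
        CofBound (O' : Set U) (E₁ : Set U) x κ) := by
  classical
  have hconv : ConvexSubring O' := hT.1
  -- x is not in E₁ (otherwise x itself would realize its cut over E)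
  have hx1 : x ∉ E₁ := fun h => hnr ⟨x, h, hx, fun e _ => Iff.rfl⟩
  -- key approximation: every point of E₁ is no closer to x than some point of E
  have between : ∀ c₁ ∈ (E₁ : Set U), ∃ e ∈ (E : Set U), |x - e| ≤ |x - c₁| := by
    intro c₁ hc₁
    by_cases hcE : c₁ ∈ E
    · exact ⟨c₁, hcE, le_refl _⟩
    · have h : ¬ ∀ e ∈ E, ((e : U) < c₁ ↔ (e : U) < x) :=
        fun h => hnr ⟨c₁, hc₁, hcE, h⟩
      push_neg at h
      obtain ⟨e, he, hne⟩ := h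
      refine ⟨e, he, ?_⟩
      rcases hne with ⟨h1, h2⟩ | ⟨h1, h2⟩
      · rw [abs_of_nonpos (by linarith), abs_of_nonpos (by linarith)]
        linarith
      · rw [abs_of_nonneg (by linarith), abs_of_nonneg (by linarith)]
        linarith
  have hxne : ∀ c₁ ∈ (E₁ : Set U), x - c₁ ≠ 0 := by
    intro c₁ hc₁ h
    exact hx1 (show x ∈ E₁ by rw [sub_eq_zero.mp h]; exact hc₁)
  have approx : ∀ c₁ : U, ∃ e : U, c₁ ∈ (E₁ : Set U) →
      e ∈ (E : Set U) ∧ preceq (O' : Set U) (x - e) (x - c₁) := by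
    intro c₁
    by_cases hc₁ : c₁ ∈ (E₁ : Set U)
    · obtain ⟨e, he, habs⟩ := between c₁ hc₁
      exact ⟨e, fun _ => ⟨he, preceq_of_abs_le hconv (hxne c₁ hc₁) habs⟩⟩
    · exact ⟨0, fun h => absurd h hc₁⟩
  choose f hf using approx
  constructor
  · constructor
    · -- WeakIm over E → WeakIm over E₁
      intro hW c₁ hc₁
      obtain ⟨he, hpre⟩ := hf c₁ hc₁
      obtain ⟨d, hd, hprec⟩ := hW (f c₁) he
      exact ⟨d, hEE₁ hd, prec_of_prec_preceq hprec hpre⟩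
    · -- WeakIm over E₁ → WeakIm over E
      intro hW c hc
      obtain ⟨d₁, hd₁, hprec⟩ := hW c (hEE₁ hc)
      obtain ⟨he, hpre⟩ := hf d₁ hd₁
      exact ⟨f d₁, he, prec_of_preceq_prec hpre hprec⟩
  · intro _ κ
    constructor
    · rintro ⟨D, hDE, hcard, hD⟩
      refine ⟨D, fun u hu => hEE₁ (hDE hu), hcard, ?_⟩
      intro c₁ hc₁
      obtain ⟨he, hpre⟩ := hf c₁ hc₁
      obtain ⟨d, hd, hpre'⟩ := hD (f c₁) he
      exact ⟨d, hd, preceq_trans' hpre' hpre⟩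
    · rintro ⟨D, hDE₁, hcard, hD⟩
      refine ⟨f '' D, ?_, le_trans Cardinal.mk_image_le hcard, ?_⟩
      · rintro _ ⟨d, hd, rfl⟩
        exact (hf d (hDE₁ hd)).1
      · intro c hc
        obtain ⟨d, hd, hpre⟩ := hD c (hEE₁ hc)
        obtain ⟨_, hpre'⟩ := hf d (hDE₁ hd)
        exact ⟨f d, Set.mem_image_of_mem f hd, preceq_trans' hpre' hpre⟩
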